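/- For every positive integer m, every natural number ν with 0 ≤ ν ≤ m, and every rational x, one has ∑_{k=0, k+m odd}^{m-1} C(m,k)·C(k+m,ν)·C(k+m−ν, m−ν)·B_k(x) = (1/2)·∑_{j=0}^{m-1} (−1)^{j+m+1}·C(m,j+1)·C(j+m,ν)·C(j+m−ν, m−ν)·(j+m+1)·x^j, where the sum on the left runs only over those indices k in {0,…,m−1} for which k+m is odd. -/

import Mathlib

open Finset Polynomial

private def AK (m k : ℕ) : ℚ := (m.choose k : ℚ) * ((k + m).choose m : ℚ)

private lemma findiff : ∀ (n : ℕ), ∀ (d c : ℕ),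
    ∑ t ∈ Finset.range (n+1), (-1:ℚ)^t * (n.choose t) * ((c+t).choose (n+d)) =
      (-1:ℚ)^n * (c.choose d) := by
  intro n
  induction n with
  | zero => intro d c; simp
  | succ n ih =>
    intro d c
    rw [Finset.sum_range_succ']
    have e1 : ∀ t ∈ Finset.range (n+1),
        (-1:ℚ)^(t+1) * ((n+1).choose (t+1)) * ((c+(t+1)).choose (n+1+d))
        = -((-1:ℚ)^t * (n.choose t) * (((c+1)+t).choose (n+(d+1))))
          + -((-1:ℚ)^t * (n.choose (t+1)) * (((c+1)+t).choose (n+1+d))) := by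
      intro t _
      rw [Nat.choose_succ_succ]
      have h1 : c + (t+1) = (c+1)+t := by omega
      have h2 : n + 1 + d = n + (d+1) := by omega
      rw [h1, h2]
      push_cast
      ring
    rw [Finset.sum_congr rfl e1, Finset.sum_add_distrib]
    have hA : ∑ t ∈ Finset.range (n+1),
        -((-1:ℚ)^t * (n.choose t) * (((c+1)+t).choose (n+(d+1))))
        = -((-1:ℚ)^n * ((c+1).choose (d+1))) := by
      rw [Finset.sum_neg_distrib, ih (d+1) (c+1)]
    have hB : ∑ t ∈ Finset.range (n+1),
        -((-1:ℚ)^t * (n.choose (t+1)) * (((c+1)+t).choose (n+1+d)))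
        = (-1:ℚ)^n * (c.choose (d+1)) - (c.choose (n+1+d)) := by
      have hG := ih (d+1) c
      rw [Finset.sum_range_succ'] at hG
      have e2 : ∀ t ∈ Finset.range n,
          (-1:ℚ)^(t+1) * (n.choose (t+1)) * ((c+(t+1)).choose (n+(d+1)))
          = -((-1:ℚ)^t * (n.choose (t+1)) * (((c+1)+t).choose (n+1+d))) := by
        intro t _
        have h1 : c + (t+1) = (c+1)+t := by omega
        have h2 : n + (d+1) = n+1+d := by omega
        rw [h1, h2]
        push_cast
        ring
      rw [Finset.sum_congr rfl e2] at hG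
      rw [Finset.sum_range_succ, Nat.choose_succ_self]
      simp only [Nat.cast_zero, mul_zero, zero_mul, neg_zero, add_zero] at hG ⊢
      have h2 : n + (d+1) = n+1+d := by omega
      rw [h2] at hG
      simp only [pow_zero, Nat.choose_zero_right, Nat.cast_one, one_mul, mul_one, add_zero] at hG
      -- hG : ∑ t ∈ range n, -(...) + C(c, n+1+d) = (-1)^n * C(c,d+1)
      linarith [hG]
    rw [hA, hB]
    have hP : ((c+1).choose (d+1) : ℚ) = (c.choose d) + (c.choose (d+1)) := by
      rw [Nat.choose_succ_succ]; push_cast; ring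
    simp only [pow_zero, Nat.choose_zero_right, Nat.cast_one, one_mul, mul_one, add_zero,
      pow_succ]
    rw [hP]
    ring

private lemma ida (m i : ℕ) (hi : i ≤ m) :
    ∑ k ∈ Finset.range (m+1), (-1:ℚ)^k * (m.choose k) * ((k+m).choose m) * (k.choose i)
      = (-1:ℚ)^m * (m.choose i) * ((i+m).choose m) := by
  obtain ⟨r, rfl⟩ : ∃ r, m = i + r := ⟨m - i, by omega⟩
  -- split range (i+r+1) at i
  have hsplit : Finset.range (i+r+1) = Finset.range i ∪ Finset.Ico i (i+r+1) := by
    rw [Finset.range_eq_Ico, Finset.range_eq_Ico, Finset.Ico_union_Ico_eq_Ico (by omega) (by omega)]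
  rw [hsplit, Finset.sum_union (by
    simp [Finset.disjoint_left, Finset.mem_Ico] ; omega)]
  have h0 : ∑ k ∈ Finset.range i, (-1:ℚ)^k * ((i+r).choose k) * ((k+(i+r)).choose (i+r)) * (k.choose i) = 0 := by
    apply Finset.sum_eq_zero
    intro k hk
    rw [Nat.choose_eq_zero_of_lt (Finset.mem_range.1 hk)]
    simp
  rw [h0, zero_add, Finset.sum_Ico_eq_sum_range]
  have hlen : i + r + 1 - i = r + 1 := by omega
  rw [hlen]
  have e1 : ∀ t ∈ Finset.range (r+1),
      (-1:ℚ)^(i+t) * ((i+r).choose (i+t)) * (((i+t)+(i+r)).choose (i+r)) * ((i+t).choose i)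
      = ((-1:ℚ)^i * ((i+r).choose i)) * ((-1:ℚ)^t * (r.choose t) * (((i+(i+r))+t).choose (r+i))) := by
    intro t ht
    have ht' : t ≤ r := by have := Finset.mem_range.1 ht; omega
    have hcm : ((i+r).choose (i+t) : ℚ) * ((i+t).choose i) = ((i+r).choose i) * (r.choose t) := by
      have := Nat.choose_mul (n := i+r) (k := i+t) (show i ≤ i+t by omega)
      have h1 : i + r - i = r := by omega
      have h2 : i + t - i = t := by omega
      rw [h1, h2] at this
      exact_mod_cast congrArg (Nat.cast : ℕ → ℚ) this
    have h3 : (i+t)+(i+r) = (i+(i+r))+t := by omega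
    have h4 : i + r = r + i := by omega
    rw [h3, pow_add]
    calc (-1:ℚ)^i * (-1:ℚ)^t * ((i+r).choose (i+t)) * (((i+(i+r))+t).choose (i+r)) * ((i+t).choose i)
        = ((-1:ℚ)^i * (-1:ℚ)^t) * (((i+r).choose (i+t) : ℚ) * ((i+t).choose i)) * (((i+(i+r))+t).choose (i+r)) := by ring
      _ = ((-1:ℚ)^i * (-1:ℚ)^t) * (((i+r).choose i : ℚ) * (r.choose t)) * (((i+(i+r))+t).choose (i+r)) := by rw [hcm]
      _ = ((-1:ℚ)^i * ((i+r).choose i)) * ((-1:ℚ)^t * (r.choose t) * (((i+(i+r))+t).choose (r+i))) := by rw [← h4]; ring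
  rw [Finset.sum_congr rfl e1, ← Finset.mul_sum, findiff r i (i+(i+r))]
  have hsym : ((i+(i+r)).choose i : ℚ) = ((i+(i+r)).choose (i+r)) := by
    have := Nat.choose_symm (show i+r ≤ i+(i+r) by omega)
    have h5 : i + (i+r) - (i+r) = i := by omega
    rw [h5] at this
    exact_mod_cast congrArg (Nat.cast : ℕ → ℚ) this
  rw [hsym.symm] at *
  rw [hsym]
  rw [pow_add]
  ring

private lemma bern_comp_one_sub : ∀ n : ℕ,
    (Polynomial.bernoulli n).comp (1 - Polynomial.X : ℚ[X]) = (-1:ℚ)^n • Polynomial.bernoulli n := by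
  intro n
  induction n with
  | zero => simp [Polynomial.bernoulli_zero]
  | succ n ih =>
    set F : ℚ[X] := (Polynomial.bernoulli (n+1)).comp (1 - Polynomial.X)
        - (-1:ℚ)^(n+1) • Polynomial.bernoulli (n+1) with hF
    have hd : Polynomial.derivative F = 0 := by
      rw [hF, derivative_sub, derivative_smul, derivative_comp,
        Polynomial.derivative_bernoulli (n+1)]
      simp only [Nat.add_sub_cancel, derivative_sub, derivative_one, derivative_X, zero_sub,
        mul_comp, natCast_comp]
      rw [ih]
      rw [smul_eq_C_mul, smul_eq_C_mul]
      simp only [map_pow, map_neg, map_one]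
      push_cast
      ring
    have hc := Polynomial.eq_C_of_derivative_eq_zero hd
    have h0 : F.coeff 0 = 0 := by
      rw [Polynomial.coeff_zero_eq_eval_zero, hF]
      simp only [eval_sub, eval_comp, eval_sub, eval_one, eval_X, sub_zero, eval_smul,
        Polynomial.bernoulli_eval_one, Polynomial.bernoulli_eval_zero]
      rw [bernoulli'_eq_bernoulli]
      simp [smul_eq_mul]
    have : F = 0 := by rw [hc, h0, map_zero]
    have := sub_eq_zero.1 (hF ▸ this)
    exact this

private lemma bern_reflect (n : ℕ) (x : ℚ) :
    (Polynomial.bernoulli n).eval (1 - x) = (-1:ℚ)^n * (Polynomial.bernoulli n).eval x := by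
  have := congrArg (Polynomial.eval x) (bern_comp_one_sub n)
  simpa [Polynomial.eval_comp, smul_eq_mul] using this

private lemma bern_neg (n : ℕ) (y : ℚ) :
    (Polynomial.bernoulli n).eval (-y) = (-1:ℚ)^n * (Polynomial.bernoulli n).eval (1+y) := by
  have h := bern_reflect n (1+y)
  have e : 1 - (1+y) = -y := by ring
  rw [e] at h
  exact h



private lemma bern_expand (k M : ℕ) (hk : k ≤ M) (y : ℚ) :
    (Polynomial.bernoulli k).eval (1 + y)
      = ∑ i ∈ Finset.range (M+1), (k.choose i : ℚ) * (Polynomial.bernoulli i).eval y := by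
  have hsub : Finset.range (k+1) ⊆ Finset.range (M+1) := Finset.range_subset_range.2 (by omega)
  rw [← Finset.sum_subset hsub (by
    intro i hiM hi
    have : k < i := by
      rcases Nat.lt_or_ge k i with h | h
      · exact h
      · exact absurd (Finset.mem_range.2 (by omega)) hi
    rw [Nat.choose_eq_zero_of_lt this]
    simp)]
  cases k with
  | zero =>
    simp [Polynomial.bernoulli_zero]
  | succ k' =>
    rw [Finset.sum_range_succ]
    have hs := congrArg (Polynomial.eval y) (Polynomial.sum_bernoulli k')
    rw [Polynomial.eval_finset_sum, Polynomial.eval_monomial] at hs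
    simp only [Polynomial.eval_smul, smul_eq_mul] at hs
    rw [hs, Nat.choose_self, Polynomial.bernoulli_eval_one_add]
    push_cast
    ring




private lemma parity (m : ℕ) (y : ℚ) :
    ∑ k ∈ Finset.range (m+1), AK m k * (Polynomial.bernoulli k).eval (-y)
      = (-1:ℚ)^m * ∑ k ∈ Finset.range (m+1), AK m k * (Polynomial.bernoulli k).eval y := by
  have e1 : ∀ k ∈ Finset.range (m+1),
      AK m k * (Polynomial.bernoulli k).eval (-y)
      = ∑ i ∈ Finset.range (m+1),
          ((-1:ℚ)^k * (m.choose k) * ((k+m).choose m) * (k.choose i))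
            * (Polynomial.bernoulli i).eval y := by
    intro k hk
    rw [bern_neg, bern_expand k m (by have := Finset.mem_range.1 hk; omega), ← mul_assoc, Finset.mul_sum]
    apply Finset.sum_congr rfl
    intro i _
    simp only [AK]
    ring
  rw [Finset.sum_congr rfl e1, Finset.sum_comm]
  rw [Finset.mul_sum]
  apply Finset.sum_congr rfl
  intro i hi
  rw [← Finset.sum_mul, ida m i (by have := Finset.mem_range.1 hi; omega)]
  simp only [AK]
  ring

private lemma diffQ (m : ℕ) (y : ℚ) :
    (∑ k ∈ Finset.range (m+1), AK m k * (Polynomial.bernoulli k).eval (1+y))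
      - ∑ k ∈ Finset.range (m+1), AK m k * (Polynomial.bernoulli k).eval y
      = ∑ k ∈ Finset.range (m+1), AK m k * k * y^(k-1) := by
  rw [← Finset.sum_sub_distrib]
  apply Finset.sum_congr rfl
  intro k _
  rw [Polynomial.bernoulli_eval_one_add]
  ring




private lemma core (m : ℕ) (x : ℚ) :
    ∑ k ∈ (Finset.range m).filter (fun k => Odd (k + m)),
        (m.choose k : ℚ) * ((k+m).choose m) * (Polynomial.bernoulli k).eval x
      = (1/2) * ∑ j ∈ Finset.range m,
        (-1:ℚ)^(j+m+1) * (m.choose (j+1)) * ((j+m).choose m) * ((j+m+1 : ℕ) : ℚ) * x^j := by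
  set S := ∑ k ∈ (Finset.range m).filter (fun k => Odd (k + m)),
      (m.choose k : ℚ) * ((k+m).choose m) * (Polynomial.bernoulli k).eval x with hS
  -- Step 1 : 2*S as a full alternating-free combination
  have hneg1 : ∀ k : ℕ, (-1:ℚ)^m * (-1:ℚ)^k = (-1:ℚ)^(k+m) := by
    intro k; rw [← pow_add, Nat.add_comm]
  have step1 :
      (∑ k ∈ Finset.range (m+1), AK m k * (Polynomial.bernoulli k).eval x)
        - (-1:ℚ)^m * (∑ k ∈ Finset.range (m+1), AK m k
            * ((-1:ℚ)^k * (Polynomial.bernoulli k).eval x))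
      = 2 * S := by
    rw [Finset.mul_sum, ← Finset.sum_sub_distrib]
    rw [Finset.sum_range_succ]
    have hlast : AK m m * (Polynomial.bernoulli m).eval x
        - (-1:ℚ)^m * (AK m m * ((-1:ℚ)^m * (Polynomial.bernoulli m).eval x)) = 0 := by
      have h1 : (-1:ℚ)^m * (-1:ℚ)^m = 1 := by
        rw [← pow_add]; exact Even.neg_one_pow ⟨m, rfl⟩
      calc AK m m * (Polynomial.bernoulli m).eval x
          - (-1:ℚ)^m * (AK m m * ((-1:ℚ)^m * (Polynomial.bernoulli m).eval x))
          = AK m m * (Polynomial.bernoulli m).eval x * (1 - (-1:ℚ)^m * (-1:ℚ)^m) := by ring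
        _ = 0 := by rw [h1]; ring
    rw [hlast, add_zero]
    rw [hS, Finset.sum_filter, Finset.mul_sum]
    apply Finset.sum_congr rfl
    intro k _
    rcases Nat.even_or_odd (k+m) with he | ho
    · rw [if_neg (Nat.not_odd_iff_even.mpr he)]
      have h1 : (-1:ℚ)^(k+m) = 1 := Even.neg_one_pow he
      calc AK m k * (Polynomial.bernoulli k).eval x
            - (-1:ℚ)^m * (AK m k * ((-1:ℚ)^k * (Polynomial.bernoulli k).eval x))
          = AK m k * (Polynomial.bernoulli k).eval x * (1 - (-1:ℚ)^m * (-1:ℚ)^k) := by ring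
        _ = 2 * 0 := by rw [hneg1, h1]; ring
    · rw [if_pos ho]
      have : (-1:ℚ)^(k+m) = -1 := Odd.neg_one_pow ho
      calc AK m k * (Polynomial.bernoulli k).eval x
            - (-1:ℚ)^m * (AK m k * ((-1:ℚ)^k * (Polynomial.bernoulli k).eval x))
          = AK m k * (Polynomial.bernoulli k).eval x * (1 - (-1:ℚ)^m * (-1:ℚ)^k) := by ring
        _ = 2 * ((m.choose k : ℚ) * ((k+m).choose m) * (Polynomial.bernoulli k).eval x) := by
            rw [hneg1, this]; simp only [AK]; ring
  -- Step 2 : reflection + parity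
  have step2 : (∑ k ∈ Finset.range (m+1), AK m k
      * ((-1:ℚ)^k * (Polynomial.bernoulli k).eval x))
      = (-1:ℚ)^m * ∑ k ∈ Finset.range (m+1), AK m k * (Polynomial.bernoulli k).eval (x-1) := by
    have e1 : ∀ k ∈ Finset.range (m+1), AK m k * ((-1:ℚ)^k * (Polynomial.bernoulli k).eval x)
        = AK m k * (Polynomial.bernoulli k).eval (-(x-1)) := by
      intro k _
      rw [show -(x-1) = 1 - x by ring, bern_reflect]
    rw [Finset.sum_congr rfl e1, parity m (x-1)]
  -- Step 3 : 2*S = difference = derivative-type sum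
  have step3 : 2 * S = ∑ k ∈ Finset.range (m+1), AK m k * k * (x-1)^(k-1) := by
    rw [← step1, step2, ← mul_assoc]
    have h1 : (-1:ℚ)^m * (-1:ℚ)^m = 1 := by
      rw [← pow_add]; exact Even.neg_one_pow ⟨m, rfl⟩
    rw [h1, one_mul]
    have := diffQ m (x-1)
    rw [show 1 + (x-1) = x by ring] at this
    exact this
  -- Step 4 : rewrite derivative-type sum as the RHS sum
  have step4 : ∑ k ∈ Finset.range (m+1), AK m k * k * (x-1)^(k-1)
      = ∑ j ∈ Finset.range m,
        (-1:ℚ)^(j+m+1) * (m.choose (j+1)) * ((j+m).choose m) * ((j+m+1 : ℕ) : ℚ) * x^j := by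
    rw [Finset.sum_range_succ']
    simp only [Nat.cast_zero, mul_zero, zero_mul, add_zero, Nat.add_sub_cancel]
    -- expand (x-1)^j
    have e2 : ∀ j ∈ Finset.range m, AK m (j+1) * ((j+1 : ℕ) : ℚ) * (x-1)^j
        = ∑ i ∈ Finset.range m, ((i+1 : ℕ) : ℚ) * x^i * (-1:ℚ)^i * (-1)
            * ((-1:ℚ)^(j+1) * (m.choose (j+1)) * (((j+1)+m).choose m) * ((j+1).choose (i+1))) := by
      intro j hj
      have hjm : j + 1 ≤ m := Finset.mem_range.1 hj
      have hexp : (x-1)^j = ∑ i ∈ Finset.range (j+1), x^i * (-1:ℚ)^(j-i) * ((j.choose i : ℕ) : ℚ) := by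
        rw [show x - 1 = x + (-1) by ring, add_pow]
      rw [hexp, ← Finset.sum_subset (Finset.range_subset_range.2 hjm) (by
        intro i _ hi
        have : j < i := by
          rcases Nat.lt_or_ge j i with h | h
          · exact h
          · exact absurd (Finset.mem_range.2 (by omega)) hi
        rw [Nat.choose_eq_zero_of_lt (show j+1 < i+1 by omega)]
        simp), Finset.mul_sum]
      apply Finset.sum_congr rfl
      intro i hi
      rcases Nat.lt_or_ge j i with hlt | hge
      · -- j < i : both sides vanish
        rw [Nat.choose_eq_zero_of_lt hlt, Nat.choose_eq_zero_of_lt (by omega : j+1 < i+1)]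
        simp
      · -- i ≤ j
        have hpow : (-1:ℚ)^(j-i) = (-1:ℚ)^j * (-1:ℚ)^i := by
          rw [← pow_add, show j + i = (j-i) + 2*i by omega, pow_add, pow_mul]
          simp
        have hchoose : ((j+1 : ℕ) : ℚ) * (j.choose i) = ((i+1 : ℕ) : ℚ) * ((j+1).choose (i+1)) := by
          have := Nat.add_one_mul_choose_eq j i
          have := congrArg (Nat.cast : ℕ → ℚ) this
          push_cast at this ⊢
          linarith [this]
        rw [hpow]
        simp only [AK]
        calc (m.choose (j+1) : ℚ) * (((j+1)+m).choose m) * ((j+1 : ℕ) : ℚ)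
              * (x^i * ((-1:ℚ)^j * (-1:ℚ)^i) * (j.choose i))
            = (((j+1 : ℕ) : ℚ) * (j.choose i)) * ((m.choose (j+1) : ℚ) * (((j+1)+m).choose m)
                * (x^i * ((-1:ℚ)^j * (-1:ℚ)^i))) := by push_cast; ring
          _ = (((i+1 : ℕ) : ℚ) * ((j+1).choose (i+1))) * ((m.choose (j+1) : ℚ) * (((j+1)+m).choose m)
                * (x^i * ((-1:ℚ)^j * (-1:ℚ)^i))) := by rw [hchoose]
          _ = ((i+1 : ℕ) : ℚ) * x^i * (-1:ℚ)^i * (-1)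
                * ((-1:ℚ)^(j+1) * (m.choose (j+1)) * (((j+1)+m).choose m) * ((j+1).choose (i+1))) := by
              push_cast; ring
    rw [Finset.sum_congr rfl e2, Finset.sum_comm]
    apply Finset.sum_congr rfl
    intro i hi
    have him : i + 1 ≤ m := Finset.mem_range.1 hi
    -- pull constants out of the inner sum
    rw [← Finset.mul_sum]
    have hsum : ∑ j ∈ Finset.range m,
        ((-1:ℚ)^(j+1) * (m.choose (j+1)) * (((j+1)+m).choose m) * ((j+1).choose (i+1)))
        = (-1:ℚ)^m * (m.choose (i+1)) * (((i+1)+m).choose m) := by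
      have := ida m (i+1) him
      rw [Finset.sum_range_succ'] at this
      simpa using this
    rw [hsum]
    -- numeric identity : (i+1) * C(i+1+m, m) = (i+m+1) * C(i+m, m)
    have hnum : ((i+1 : ℕ) : ℚ) * (((i+1)+m).choose m) = ((i+m+1 : ℕ) : ℚ) * ((i+m).choose m) := by
      have h1 := Nat.add_one_mul_choose_eq (i+m) i
      have h2 : (i+m).choose i = (i+m).choose m := by
        have := Nat.choose_symm (show m ≤ i+m by omega)
        rwa [show i+m-m = i by omega] at this
      have h3 : (i+m+1).choose (i+1) = ((i+1)+m).choose m := by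
        have := Nat.choose_symm (show m ≤ i+1+m by omega)
        rw [show i+1+m-m = i+1 by omega] at this
        rw [show i+m+1 = i+1+m by omega]
        exact this.symm ▸ rfl
      rw [h2, h3] at h1
      have := congrArg (Nat.cast : ℕ → ℚ) h1
      push_cast at this ⊢
      linarith [this]
    have hpow2 : (-1:ℚ)^i * (-1) * (-1:ℚ)^m = (-1:ℚ)^(i+m+1) := by
      rw [pow_add, pow_add, pow_one]; ring
    calc ((i+1 : ℕ) : ℚ) * x^i * (-1:ℚ)^i * (-1)
          * ((-1:ℚ)^m * (m.choose (i+1)) * (((i+1)+m).choose m))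
        = ((-1:ℚ)^i * (-1) * (-1:ℚ)^m) * (m.choose (i+1))
          * (((i+1 : ℕ) : ℚ) * (((i+1)+m).choose m)) * x^i := by ring
      _ = ((-1:ℚ)^(i+m+1)) * (m.choose (i+1))
          * (((i+m+1 : ℕ) : ℚ) * ((i+m).choose m)) * x^i := by rw [hpow2, hnum]
      _ = (-1:ℚ)^(i+m+1) * (m.choose (i+1)) * ((i+m).choose m) * ((i+m+1 : ℕ) : ℚ) * x^i := by ring
  rw [step4] at step3
  linarith [step3]

theorem alzer_kwong_extension_1 (m : ℕ) (hm : 0 < m) (ν : ℕ) (hν : ν ≤ m) (x : ℚ) :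
    ∑ k ∈ (Finset.range m).filter (fun k => Odd (k + m)),
      (m.choose k : ℚ) * ((k + m).choose ν) * ((k + m - ν).choose (m - ν)) *
        (Polynomial.bernoulli k).eval x
    = (1 / 2) * ∑ j ∈ Finset.range m,
        (-1 : ℚ) ^ (j + m + 1) * (m.choose (j + 1)) * ((j + m).choose ν) *
          ((j + m - ν).choose (m - ν)) * (j + m + 1) * x ^ j := by
  have key : ∀ n : ℕ, ((n+m).choose ν : ℚ) * ((n+m-ν).choose (m-ν) : ℚ)
      = (m.choose ν : ℚ) * ((n+m).choose m : ℚ) := by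
    intro n
    have h := Nat.choose_mul (n := n+m) (k := m) hν
    have := congrArg (Nat.cast : ℕ → ℚ) h
    push_cast at this
    linarith [this]
  have e1 : ∀ k ∈ (Finset.range m).filter (fun k => Odd (k + m)),
      (m.choose k : ℚ) * ((k + m).choose ν) * ((k + m - ν).choose (m - ν)) *
        (Polynomial.bernoulli k).eval x
      = (m.choose ν : ℚ) * ((m.choose k : ℚ) * ((k+m).choose m)
          * (Polynomial.bernoulli k).eval x) := by
    intro k _
    linear_combination ((m.choose k : ℚ) * (Polynomial.bernoulli k).eval x) * key k
  have e2 : ∀ j ∈ Finset.range m,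
      (-1 : ℚ) ^ (j + m + 1) * (m.choose (j + 1)) * ((j + m).choose ν) *
          ((j + m - ν).choose (m - ν)) * (j + m + 1) * x ^ j
      = (m.choose ν : ℚ) * ((-1:ℚ)^(j+m+1) * (m.choose (j+1)) * ((j+m).choose m)
          * ((j+m+1 : ℕ) : ℚ) * x^j) := by
    intro j _
    have hc : ((j+m+1 : ℕ) : ℚ) = (j : ℚ) + m + 1 := by push_cast; ring
    rw [hc]
    linear_combination ((-1:ℚ)^(j+m+1) * (m.choose (j+1)) * ((j:ℚ)+m+1) * x^j) * key j
  rw [Finset.sum_congr rfl e1, Finset.sum_congr rfl e2, ← Finset.mul_sum, ← Finset.mul_sum,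
    core m x]
  ring
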